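/- arXiv:2205.02532 — 2 statements merged into one kernel-verified Lean document; each statement's English description precedes it below -/
import Mathlib

section
/- Let 𝒢 be a Grothendieck category and let 𝒞 ⊆ 𝒢 be a Giraud subcategory, i.e., a reflective full subcategory whose inclusion S: 𝒞 → 𝒢 admits an exact left adjoint Q: 𝒢 → 𝒞. If N ∈ 𝒢 is a Noetherian object, then Q(N) is a Noetherian object of 𝒞. -/
open CategoryTheory Limits

universe v u u'

/-- Let `𝒢` be a Grothendieck category (an abelian category with colimits satisfying
AB5 and having a separator) and let `𝒞 ⊆ 𝒢` be a Giraud subcategory: a reflective full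
subcategory whose (fully faithful) inclusion `S : 𝒞 ⥤ 𝒢` admits an exact left adjoint
`Q : 𝒢 ⥤ 𝒞` (exactness of the left adjoint `Q` amounts to preservation of finite
limits).  If `N` is a Noetherian object of `𝒢` (its lattice of subobjects has the
ascending chain condition), then `Q(N)` is a Noetherian object of `𝒞`. -/
theorem giraud_noetherianObject
    {C : Type u} [Category.{v} C] [Abelian C] [HasColimits C] [AB5 C] [HasSeparator C]
    {D : Type u'} [Category.{v} D]
    (S : D ⥤ C) [S.Full] [S.Faithful]
    (Q : C ⥤ D) (adj : Q ⊣ S) [PreservesFiniteLimits Q]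
    (N : C) [IsNoetherianObject N] :
    IsNoetherianObject (Q.obj N) := by
  have hS : S.PreservesMonomorphisms := Functor.preservesMonomorphisms_of_adjunction adj
  set u : N ⟶ S.obj (Q.obj N) := adj.unit.app N with hu
  have hQuε : Q.map u ≫ adj.counit.app (Q.obj N) = 𝟙 _ := adj.left_triangle_components N
  have hQu : IsIso (Q.map u) := by
    have : IsIso (adj.counit.app (Q.obj N)) := inferInstance
    exact IsIso.of_isIso_comp_right (Q.map u) (adj.counit.app (Q.obj N))
  -- the map from subobjects of `Q N` to subobjects of `N`
  set g : Subobject (Q.obj N) → Subobject N := fun X =>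
    Subobject.mk (pullback.snd (S.map X.arrow) u) with hg
  -- the map back
  set h : Subobject N → Subobject (Q.obj N) := fun P => Subobject.mk (Q.map P.arrow) with hh
  have gmono : Monotone g := by
    intro X Y hXY
    have comm : (pullback.fst (S.map X.arrow) u ≫ S.map (Subobject.ofLE X Y hXY)) ≫
        S.map Y.arrow = pullback.snd (S.map X.arrow) u ≫ u := by
      rw [Category.assoc, ← S.map_comp, Subobject.ofLE_arrow, pullback.condition]
    exact Subobject.mk_le_mk_of_comm (pullback.lift _ _ comm) (pullback.lift_snd _ _ comm)
  have hmono : Monotone h := by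
    intro P R hPR
    refine Subobject.mk_le_mk_of_comm (Q.map (Subobject.ofLE P R hPR)) ?_
    rw [← Q.map_comp, Subobject.ofLE_arrow]
  have hgX : ∀ X : Subobject (Q.obj N), h (g X) = X := by
    intro X
    haveI : HasPullback (Q.map (S.map X.arrow)) (Q.map u) :=
      hasPullback_of_preservesPullback Q _ _
    show Subobject.mk (Q.map (Subobject.mk (pullback.snd (S.map X.arrow) u)).arrow) = X
    have e1 : Subobject.mk (Q.map (Subobject.mk (pullback.snd (S.map X.arrow) u)).arrow)
        = Subobject.mk (Q.map (pullback.snd (S.map X.arrow) u)) := by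
      refine Subobject.mk_eq_mk_of_comm _ _ (Q.mapIso (Subobject.underlyingIso _)) ?_
      rw [Functor.mapIso_hom, ← Q.map_comp, Subobject.underlyingIso_hom_comp_eq_mk]
    rw [e1]
    conv_rhs => rw [← Subobject.mk_arrow X]
    refine Subobject.mk_eq_mk_of_comm _ _
      (PreservesPullback.iso Q (S.map X.arrow) u ≪≫
        asIso (pullback.fst (Q.map (S.map X.arrow)) (Q.map u)) ≪≫
        asIso (adj.counit.app (X : D))) ?_
    have nat : Q.map (S.map X.arrow) ≫ adj.counit.app (Q.obj N)
        = adj.counit.app (X : D) ≫ X.arrow := adj.counit.naturality X.arrow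
    simp only [Iso.trans_hom, asIso_hom, Category.assoc, ← nat]
    rw [pullback.condition_assoc, ← Category.assoc, PreservesPullback.iso_hom_snd, hQuε,
      Category.comp_id]
  constructor
  constructor
  refine Subrelation.wf (r := InvImage (· > ·) g) ?_
    (InvImage.wf g (wellFounded_gt (α := Subobject N)))
  intro X Y hXY
  refine lt_of_le_not_ge (gmono hXY.le) fun hc => ?_
  have : X ≤ Y := by simpa [hgX] using hmono hc
  exact absurd this (not_le_of_gt hXY)
end

section
/- Let 𝒢 be a Grothendieck category with Gabriel filtration 0 = 𝒢_{-1} ⊆ 𝒢_0 ⊆ … ⊆ 𝒢_α ⊆ …, and let 𝒢̃ = ⋃_α 𝒢_α. Then every Noetherian object N of 𝒢 belongs to 𝒢̃, i.e., there exists an ordinal α with N ∈ 𝒢_α. -/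
/-! ## Torsion theories in Grothendieck categories -/

open CategoryTheory Limits

universe v u

/-- A torsion theory `τ = (𝒯, ℱ)` in an abelian category with coproducts: the torsion
class `𝒯` is closed under quotients, extensions and coproducts, every morphism from a
torsion object to a torsion-free object vanishes, and every object `X` is an extension
`0 → T_X → X → F_X → 0` of a torsion-free object by a torsion object. -/
structure TorsionTheory (C : Type u) [Category.{v} C] [Abelian C] [HasColimits C] where
  /-- The torsion class `𝒯`. -/
  torsion : C → Prop
  /-- The torsion-free class `ℱ`. -/
  free : C → Prop
  /-- `𝒯` is closed under quotient objects. -/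
  torsion_quot : ∀ ⦃X Y : C⦄ (f : X ⟶ Y), Epi f → torsion X → torsion Y
  /-- `𝒯` is closed under extensions. -/
  torsion_ext : ∀ ⦃X Y : C⦄ (f : X ⟶ Y), Mono f → torsion X → torsion (cokernel f) →
    torsion Y
  /-- `𝒯` is closed under coproducts. -/
  torsion_coprod : ∀ ⦃ι : Type v⦄ (F : ι → C), (∀ i, torsion (F i)) → torsion (∐ F)
  /-- Every morphism from a torsion object to a torsion-free object is zero. -/
  hom_zero : ∀ ⦃T F : C⦄, torsion T → free F → ∀ f : T ⟶ F, f = 0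
  /-- Every object is an extension of a torsion-free object by a torsion object. -/
  exists_seq : ∀ X : C, ∃ (T : C) (f : T ⟶ X), Mono f ∧ torsion T ∧ free (cokernel f)

/-- A torsion theory is hereditary if its torsion class is closed under subobjects. -/
def TorsionTheory.IsHereditary {C : Type u} [Category.{v} C] [Abelian C] [HasColimits C]
    (τ : TorsionTheory C) : Prop :=
  ∀ ⦃X Y : C⦄ (f : X ⟶ Y), Mono f → τ.torsion Y → τ.torsion X

/-- A hereditary torsion class: the torsion class of a hereditary torsion theory. -/
def IsHereditaryTorsionClass {C : Type u} [Category.{v} C] [Abelian C] [HasColimits C]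
    (T : C → Prop) : Prop :=
  ∃ τ : TorsionTheory C, τ.IsHereditary ∧ τ.torsion = T

/-- The smallest hereditary torsion class containing a given class `S` of objects:
the intersection of all hereditary torsion classes containing `S`. -/
def htcGen {C : Type u} [Category.{v} C] [Abelian C] [HasColimits C]
    (S : C → Prop) : C → Prop :=
  fun X => ∀ T : C → Prop, IsHereditaryTorsionClass T → (∀ Y, S Y → T Y) → T X

/-- An object `X` is cocritical with respect to a class `T` if `X` has no nonzero
subobject lying in `T` (it is `T`-torsion free) while every proper quotient of `X`
lies in `T`. -/
def Cocritical {C : Type u} [Category.{v} C] [Abelian C] [HasColimits C]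
    (T : C → Prop) (X : C) : Prop :=
  (∀ Y : Subobject X, T ((Y : C)) → Y = ⊥) ∧
  (∀ Y : Subobject X, Y ≠ ⊥ → T (cokernel Y.arrow))

/-- One step of the Gabriel filtration: the smallest hereditary torsion class
containing a class `T` together with all the `T`-cocritical objects. -/
def gabrielStep {C : Type u} [Category.{v} C] [Abelian C] [HasColimits C]
    (T : C → Prop) : C → Prop :=
  htcGen (fun X => T X ∨ Cocritical T X)

/-- The Gabriel filtration `0 = 𝒢₋₁ ⊆ 𝒢₀ ⊆ … ⊆ 𝒢_α ⊆ …` of a Grothendieck category,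
here re-indexed so that `gabrielFiltration C 0 = 𝒢₋₁` is the class of zero objects:
at successor steps one adds all cocritical objects and closes up to the generated
hereditary torsion class, and at limit steps one takes the hereditary torsion class
generated by the union of the previous stages. -/
noncomputable def gabrielFiltration (C : Type u) [Category.{v} C] [Abelian C]
    [HasColimits C] : Ordinal.{v} → (C → Prop) :=
  fun o => Ordinal.limitRecOn (motive := fun _ => C → Prop) o
    (fun X => IsZero X)
    (fun _ T => gabrielStep T)
    (fun o _ ih => htcGen (fun X => ∃ (β : Ordinal.{v}) (h : β < o), ih β h X))

section Aux

variable {C : Type u} [Category.{v} C] [Abelian C] [HasColimits C]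

lemma htcGen_self {S : C → Prop} {X : C} (h : S X) : htcGen S X :=
  fun _ _ hST => hST X h

lemma htcGen_iso_closed {S : C → Prop} {X Y : C} (e : X ≅ Y) (h : htcGen S X) :
    htcGen S Y := by
  intro T hT hST
  obtain ⟨τ, _, ht⟩ := hT
  have hX := h T ⟨τ, ‹_›, ht⟩ hST
  rw [← ht] at hX ⊢
  exact τ.torsion_quot e.hom inferInstance hX

lemma gabrielFiltration_zero : gabrielFiltration C 0 = fun X => IsZero X :=
  Ordinal.limitRecOn_zero _ _ _

lemma gabrielFiltration_succ (α : Ordinal.{v}) :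
    gabrielFiltration C (Order.succ α) = gabrielStep (gabrielFiltration C α) :=
  Ordinal.limitRecOn_succ _ _ _ _

lemma gabrielFiltration_limit (α : Ordinal.{v}) (h : Order.IsSuccLimit α) :
    gabrielFiltration C α =
      htcGen (fun X => ∃ (β : Ordinal.{v}) (_ : β < α), gabrielFiltration C β X) :=
  Ordinal.limitRecOn_limit _ _ _ _ h

lemma gabrielFiltration_iso_closed (α : Ordinal.{v}) {X Y : C} (e : X ≅ Y)
    (h : gabrielFiltration C α X) : gabrielFiltration C α Y := by
  rcases Ordinal.zero_or_succ_or_isSuccLimit α with h0 | ⟨γ, rfl⟩ | hlim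
  · subst h0
    rw [gabrielFiltration_zero] at h ⊢
    exact h.of_iso e.symm
  · rw [gabrielFiltration_succ] at h ⊢
    exact htcGen_iso_closed e h
  · rw [gabrielFiltration_limit α hlim] at h ⊢
    exact htcGen_iso_closed e h

lemma gabrielFiltration_mono {α β : Ordinal.{v}} (h : α ≤ β) {X : C}
    (hX : gabrielFiltration C α X) : gabrielFiltration C β X := by
  induction β using Ordinal.induction with
  | h β IH =>
    rcases Ordinal.zero_or_succ_or_isSuccLimit β with h0 | ⟨γ, rfl⟩ | hlim
    · subst h0
      rwa [nonpos_iff_eq_zero.mp h] at hX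
    · rcases eq_or_lt_of_le h with rfl | hlt
      · exact hX
      · have hle : α ≤ γ := Order.lt_succ_iff.mp hlt
        rw [gabrielFiltration_succ]
        exact htcGen_self (Or.inl (IH γ (Order.lt_succ γ) hle))
    · rcases eq_or_lt_of_le h with rfl | hlt
      · exact hX
      · rw [gabrielFiltration_limit β hlim]
        exact htcGen_self ⟨α, hlt, hX⟩

/-- Key step: for an epimorphism target `M = cokernel Y.arrow` and a nonzero subobject
`Z` of `M`, the quotient `M/Z` is isomorphic to `N/Y'` for a strictly larger subobject
`Y'` of `N`. -/
lemma exists_gt_of_subobject_cokernel {N : C} (Y : Subobject N)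
    (Z : Subobject (cokernel Y.arrow)) (hZ : Z ≠ ⊥) :
    ∃ Y' : Subobject N, Y < Y' ∧
      Nonempty (cokernel Y'.arrow ≅ cokernel Z.arrow) := by
  set π : N ⟶ cokernel Y.arrow := cokernel.π Y.arrow with hπ
  set p : cokernel Y.arrow ⟶ cokernel Z.arrow := cokernel.π Z.arrow with hp
  set q : N ⟶ cokernel Z.arrow := π ≫ p with hq
  refine ⟨kernelSubobject q, ?_, ?_⟩
  · have hle : Y ≤ kernelSubobject q := by
      refine le_kernelSubobject _ _ ?_
      rw [hq, ← Category.assoc, cokernel.condition, zero_comp]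
    refine lt_of_le_of_ne hle fun e => hZ ?_
    -- if `ker q = Y`, then `Z = ⊥`
    have hfac : (kernelSubobject q).Factors (pullback.snd Z.arrow π) := by
      apply kernelSubobject_factors
      rw [hq, ← Category.assoc, ← pullback.condition, Category.assoc, hp,
        cokernel.condition, comp_zero]
    rw [← e] at hfac
    have hsnd : pullback.snd Z.arrow π ≫ π = 0 := by
      rw [← Subobject.factorThru_arrow _ _ hfac, Category.assoc]
      have : Y.arrow ≫ π = 0 := cokernel.condition Y.arrow
      rw [this, comp_zero]
    have hfst : pullback.fst Z.arrow π ≫ Z.arrow = 0 := by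
      rw [pullback.condition, hsnd]
    have : Z.arrow = 0 := zero_of_epi_comp (pullback.fst Z.arrow π) hfst
    rw [← Subobject.mk_arrow Z, Subobject.mk_eq_bot_iff_zero]
    exact this
  · -- `cokernel (ker q).arrow ≅ cokernel (kernel.ι q) ≅ cokernel Z.arrow`
    have e₁ : cokernel (kernelSubobject q).arrow ≅ cokernel (kernel.ι q) :=
      cokernel.mapIso _ _ (kernelSubobjectIso q) (Iso.refl N) (by simp)
    have : Epi q := epi_comp _ _
    have e₂ : cokernel (kernel.ι q) ≅ cokernel Z.arrow :=
      (colimit.isColimit _).coconePointUniqueUpToIso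
        (Abelian.epiIsCokernelOfKernel _ (kernelIsKernel q))
    exact ⟨e₁.trans e₂⟩

end Aux

/-- Let `𝒢` be a Grothendieck category with Gabriel filtration
`0 = 𝒢₋₁ ⊆ 𝒢₀ ⊆ … ⊆ 𝒢_α ⊆ …` and let `𝒢̃ = ⋃_α 𝒢_α`.  Then every Noetherian object
`N` of `𝒢` belongs to `𝒢̃`, i.e. there is an ordinal `α` with `N ∈ 𝒢_α`. -/
theorem noetherianObject_mem_gabrielFiltration
    {C : Type u} [Category.{v} C] [Abelian C] [HasColimits C] [AB5 C] [HasSeparator C]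
    (N : C) [IsNoetherianObject N] :
    ∃ α : Ordinal.{v}, gabrielFiltration C α N := by
  have key : ∀ Y : Subobject N, ∃ α : Ordinal.{v},
      gabrielFiltration C α (cokernel Y.arrow) := by
    intro Y
    induction Y using WellFounded.induction (wellFounded_gt (α := Subobject N))
      with
    | _ Y IH =>
    -- every nonzero subobject `Z` of `M := cokernel Y.arrow` has quotient in some stage
    have hquot : ∀ Z : Subobject (cokernel Y.arrow), Z ≠ ⊥ →
        ∃ β : Ordinal.{v}, gabrielFiltration C β (cokernel Z.arrow) := by
      intro Z hZ
      obtain ⟨Y', hYY', ⟨e⟩⟩ := exists_gt_of_subobject_cokernel Y Z hZ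
      obtain ⟨β, hβ⟩ := IH Y' hYY'
      exact ⟨β, gabrielFiltration_iso_closed β e hβ⟩
    -- take the sup of the entry ordinals over all nonzero subobjects of `M`
    have : Small.{v} (Subobject (cokernel Y.arrow)) := WellPowered.subobject_small _
    have : Small.{v} {Z : Subobject (cokernel Y.arrow) // Z ≠ ⊥} :=
      small_of_injective Subtype.val_injective
    let f : {Z : Subobject (cokernel Y.arrow) // Z ≠ ⊥} → Ordinal.{v} :=
      fun Z => (hquot Z.1 Z.2).choose
    have hbdd : BddAbove (Set.range f) := Ordinal.bddAbove_of_small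
    set α : Ordinal.{v} := ⨆ Z, f Z with hα
    have hbound : ∀ Z : Subobject (cokernel Y.arrow), Z ≠ ⊥ →
        gabrielFiltration C α (cokernel Z.arrow) := by
      intro Z hZ
      exact gabrielFiltration_mono (le_ciSup hbdd ⟨Z, hZ⟩) (hquot Z hZ).choose_spec
    refine ⟨Order.succ α, ?_⟩
    rw [gabrielFiltration_succ]
    intro T hT hST
    by_cases hc : ∃ Z : Subobject (cokernel Y.arrow), Z ≠ ⊥ ∧
        gabrielFiltration C α ((Z : C))
    · obtain ⟨Z, hZne, hZt⟩ := hc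
      obtain ⟨τ, _, hTt⟩ := hT
      have h1 : T ((Z : C)) := hST _ (Or.inl hZt)
      have h2 : T (cokernel Z.arrow) := hST _ (Or.inl (hbound Z hZne))
      rw [← hTt] at h1 h2 ⊢
      exact τ.torsion_ext Z.arrow inferInstance h1 h2
    · refine hST _ (Or.inr ⟨?_, ?_⟩)
      · intro Z hZ
        by_contra hne
        exact hc ⟨Z, hne, hZ⟩
      · intro Z hZ
        exact hbound Z hZ
  obtain ⟨α, hα⟩ := key ⊥
  refine ⟨α, gabrielFiltration_iso_closed α ?_ hα⟩
  exact (cokernelIsoOfEq Subobject.bot_arrow).trans cokernelZeroIsoTarget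
end
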